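/- Assume Ledoux's inequality: ∫₀^∞ I(λ_f(s)) ds ≤ ∫_{ℝⁿ} |∇f| dγₙ for every Lipschitz function f. Then for every Lipschitz f and every 0 < s < s+h < 1, the truncation argument yields (f*(s) - f*(s+h)) · min(I(s+h), I(s)) ≤ ∫₀ʰ |∇f|*(t) dt. In particular, f* is locally absolutely continuous on (0,1). -/

import Mathlib

open MeasureTheory Real

/-- The standard one-dimensional Gaussian density `φ(x) = (2π)^{-1/2} e^{-x²/2}`. -/
noncomputable def gaussPdf (x : ℝ) : ℝ := (2 * Real.pi) ^ (-(1:ℝ)/2) * Real.exp (-x^2 / 2)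

/-- The standard Gaussian cumulative distribution function `Φ(r) = ∫_{-∞}^r φ(t) dt`. -/
noncomputable def gaussCdf (r : ℝ) : ℝ := ∫ t in Set.Iic r, gaussPdf t

/-- The inverse of `Φ`. -/
noncomputable def gaussCdfInv : ℝ → ℝ := Function.invFun gaussCdf

/-- The Gaussian isoperimetric function `I(t) = φ(Φ⁻¹(t))` on `(0,1)`, with `I(0)=I(1)=0`. -/
noncomputable def Igauss (t : ℝ) : ℝ :=
  if t = 0 ∨ t = 1 then 0 else gaussPdf (gaussCdfInv t)

open scoped ENNReal

/-- The standard Gaussian measure `γₙ` on `ℝⁿ`. -/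
noncomputable def gaussMeasure (n : ℕ) : Measure (Fin n → ℝ) :=
  Measure.pi fun _ => ProbabilityTheory.gaussianReal 0 1

/-- The Gaussian distribution function `λ_f(t) = γₙ({|f| > t})`. -/
noncomputable def distFun (n : ℕ) (f : (Fin n → ℝ) → ℝ) (t : ℝ) : ℝ :=
  (gaussMeasure n {x | t < |f x|}).toReal

/-- The decreasing rearrangement of `f` with respect to `γₙ`:
`f*(s) = inf {t ≥ 0 : λ_f(t) ≤ s}`. -/
noncomputable def rearr (n : ℕ) (f : (Fin n → ℝ) → ℝ) (s : ℝ) : ℝ :=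
  sInf {t : ℝ | 0 ≤ t ∧ distFun n f t ≤ s}

/-- The maximal function of the rearrangement, `f**(t) = (1/t) ∫₀ᵗ f*(s) ds`. -/
noncomputable def rearr2 (n : ℕ) (f : (Fin n → ℝ) → ℝ) (t : ℝ) : ℝ :=
  (1/t) * ∫ s in (0:ℝ)..t, rearr n f s

/-- The modulus of the gradient, `|∇f|(x) = ‖Df(x)‖`. -/
noncomputable def gradNorm (n : ℕ) (f : (Fin n → ℝ) → ℝ) (x : Fin n → ℝ) : ℝ :=
  ‖fderiv ℝ f x‖

/-- The Gaussian symmetrization `f°(x) = f*(Φ(x₁))`. -/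
noncomputable def gaussSymm (n : ℕ) [NeZero n] (f : (Fin n → ℝ) → ℝ)
    (x : Fin n → ℝ) : ℝ :=
  rearr n f (gaussCdf (x 0))

section A

lemma gaussPdf_pos (x : ℝ) : 0 < gaussPdf x :=
  mul_pos (Real.rpow_pos_of_pos (by positivity) _) (Real.exp_pos _)

lemma gaussPdf_le (x : ℝ) : gaussPdf x ≤ (2 * Real.pi) ^ (-(1:ℝ)/2) := by
  have h1 : Real.exp (-x^2 / 2) ≤ 1 := Real.exp_le_one_iff.2 (by nlinarith [sq_nonneg x])
  have h2 : (0:ℝ) < (2 * Real.pi) ^ (-(1:ℝ)/2) := Real.rpow_pos_of_pos (by positivity) _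
  calc gaussPdf x ≤ (2 * Real.pi) ^ (-(1:ℝ)/2) * 1 := by
        unfold gaussPdf; gcongr
    _ = _ := mul_one _

lemma continuous_gaussPdf : Continuous gaussPdf := by
  unfold gaussPdf
  fun_prop

lemma integrable_gaussPdf : Integrable gaussPdf := by
  have : Integrable (fun x : ℝ => Real.exp (-(1/2 : ℝ) * x ^ 2)) := by
    exact integrable_exp_neg_mul_sq (by norm_num)
  have h2 : (fun x : ℝ => gaussPdf x)
      = fun x => (2 * Real.pi) ^ (-(1:ℝ)/2) * Real.exp (-(1/2 : ℝ) * x ^ 2) := by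
    funext x; unfold gaussPdf; ring_nf
  exact (this.const_mul ((2 * Real.pi) ^ (-(1:ℝ)/2))).congr
    (Filter.Eventually.of_forall fun x => (congrFun h2 x).symm)

lemma integral_gaussPdf : ∫ x, gaussPdf x = 1 := by
  have h2 : (fun x : ℝ => gaussPdf x)
      = fun x => (2 * Real.pi) ^ (-(1:ℝ)/2) * Real.exp (-(1/2 : ℝ) * x ^ 2) := by
    funext x; unfold gaussPdf; ring_nf
  rw [h2, integral_const_mul, integral_gaussian]
  have hπ : Real.pi / (1/2 : ℝ) = 2 * Real.pi := by ring
  rw [hπ, Real.sqrt_eq_rpow]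
  rw [← Real.rpow_add (by positivity)]
  norm_num

end A

section B
open Set
open scoped ENNReal

lemma gaussCdf_add {r1 r2 : ℝ} (h : r1 ≤ r2) :
    gaussCdf r2 = gaussCdf r1 + ∫ t in Set.Ioc r1 r2, gaussPdf t := by
  unfold gaussCdf
  rw [← Set.Iic_union_Ioc_eq_Iic h]
  rw [setIntegral_union (Set.Iic_disjoint_Ioc le_rfl) measurableSet_Ioc
    integrable_gaussPdf.integrableOn integrable_gaussPdf.integrableOn]

lemma gaussCdf_strictMono : StrictMono gaussCdf := by
  intro r1 r2 h
  have hI : 0 < ∫ t in Set.Ioc r1 r2, gaussPdf t := by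
    have := intervalIntegral.intervalIntegral_pos_of_pos_on
      (f := gaussPdf) (a := r1) (b := r2)
      (continuous_gaussPdf.intervalIntegrable _ _)
      (fun x _ => gaussPdf_pos x) h
    rwa [intervalIntegral.integral_of_le h.le] at this
  have h2 := gaussCdf_add h.le
  linarith

lemma gaussCdf_mono : Monotone gaussCdf := gaussCdf_strictMono.monotone

lemma gaussCdf_lipschitz :
    LipschitzWith ((2 * Real.pi) ^ (-(1:ℝ)/2)).toNNReal gaussCdf := by
  set c := (2 * Real.pi) ^ (-(1:ℝ)/2) with hc
  have hc0 : (0:ℝ) ≤ c := le_of_lt (Real.rpow_pos_of_pos (by positivity) _)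
  apply LipschitzWith.of_dist_le_mul
  have key : ∀ x y : ℝ, y ≤ x → dist (gaussCdf x) (gaussCdf y) ≤ c.toNNReal * dist x y := by
    intro x y hxy
    have hb : (∫ t in Set.Ioc y x, gaussPdf t) ≤ c * (x - y) := by
      have h1 : (∫ t in Set.Ioc y x, gaussPdf t) ≤ ∫ _ in Set.Ioc y x, c := by
        apply setIntegral_mono_on integrable_gaussPdf.integrableOn
          (integrableOn_const (by simp [Real.volume_Ioc]))
          measurableSet_Ioc
        intro t _; exact gaussPdf_le t
      have h2 : (∫ _ in Set.Ioc y x, c) = (x - y) * c := by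
        rw [setIntegral_const, measureReal_def, Real.volume_Ioc, ENNReal.toReal_ofReal (by linarith), smul_eq_mul]
      rw [h2] at h1; linarith
    have heq := gaussCdf_add hxy
    rw [Real.dist_eq, Real.dist_eq, abs_of_nonneg (sub_nonneg.2 (gaussCdf_mono hxy)),
      abs_of_nonneg (sub_nonneg.2 hxy), Real.coe_toNNReal _ hc0]
    linarith
  intro x y
  rcases le_total y x with h | h
  · exact key x y h
  · rw [dist_comm, dist_comm x y]; exact key y x h

lemma continuous_gaussCdf : Continuous gaussCdf := gaussCdf_lipschitz.continuous

noncomputable def gaussNu : Measure ℝ :=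
  volume.withDensity (fun x => ENNReal.ofReal (gaussPdf x))

lemma gaussNu_Iic (r : ℝ) : gaussNu (Set.Iic r) = ENNReal.ofReal (gaussCdf r) := by
  unfold gaussNu gaussCdf
  rw [withDensity_apply _ measurableSet_Iic]
  rw [← ofReal_integral_eq_lintegral_ofReal integrable_gaussPdf.integrableOn
    (Filter.Eventually.of_forall fun x => (gaussPdf_pos x).le)]

lemma gaussNu_univ : gaussNu Set.univ = 1 := by
  unfold gaussNu
  rw [withDensity_apply _ MeasurableSet.univ, Measure.restrict_univ]
  rw [← ofReal_integral_eq_lintegral_ofReal integrable_gaussPdf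
    (Filter.Eventually.of_forall fun x => (gaussPdf_pos x).le)]
  rw [integral_gaussPdf, ENNReal.ofReal_one]

lemma gaussCdf_le_one (r : ℝ) : gaussCdf r ≤ 1 := by
  have h := measure_mono (Set.subset_univ (Set.Iic r)) (μ := gaussNu)
  rw [gaussNu_Iic, gaussNu_univ] at h
  have := ENNReal.toReal_mono (by simp) h
  rwa [ENNReal.toReal_ofReal (by
    exact setIntegral_nonneg measurableSet_Iic fun x _ => (gaussPdf_pos x).le),
    ENNReal.toReal_one] at this

lemma gaussCdf_nonneg (r : ℝ) : 0 ≤ gaussCdf r :=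
  setIntegral_nonneg measurableSet_Iic fun x _ => (gaussPdf_pos x).le

lemma gaussCdf_pos (r : ℝ) : 0 < gaussCdf r :=
  lt_of_le_of_lt (gaussCdf_nonneg (r - 1)) (gaussCdf_strictMono (by linarith))

lemma gaussCdf_lt_one (r : ℝ) : gaussCdf r < 1 :=
  lt_of_lt_of_le (gaussCdf_strictMono (by linarith : r < r + 1)) (gaussCdf_le_one (r + 1))

lemma exists_gaussCdf_lt {t : ℝ} (ht : 0 < t) : ∃ r : ℝ, gaussCdf r < t := by
  have hint : (⋂ k : ℕ, Set.Iic (-(k:ℝ))) = ∅ := by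
    ext x
    simp only [Set.mem_iInter, Set.mem_Iic, Set.mem_empty_iff_false, iff_false]
    push_neg
    obtain ⟨k, hk⟩ := exists_nat_gt (-x)
    exact ⟨k, by linarith⟩
  have hanti : Antitone (fun k : ℕ => Set.Iic (-(k:ℝ))) := by
    intro i j hij
    apply Set.Iic_subset_Iic.2
    simp only [neg_le_neg_iff, Nat.cast_le]
    exact_mod_cast hij
  have hm := hanti.measure_iInter (μ := gaussNu)
    (fun i => measurableSet_Iic.nullMeasurableSet)
    ⟨0, by rw [gaussNu_Iic]; exact ENNReal.ofReal_ne_top⟩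
  rw [hint, measure_empty] at hm
  have h2 : ⨅ k : ℕ, gaussNu (Set.Iic (-(k:ℝ))) < ENNReal.ofReal t := by
    rw [← hm]; exact ENNReal.ofReal_pos.2 ht
  obtain ⟨k, hk⟩ := iInf_lt_iff.1 h2
  refine ⟨-(k:ℝ), ?_⟩
  rw [gaussNu_Iic] at hk
  exact (ENNReal.ofReal_lt_ofReal_iff ht).1 hk

lemma exists_lt_gaussCdf {t : ℝ} (ht : t < 1) : ∃ r : ℝ, t < gaussCdf r := by
  by_contra hcon
  push_neg at hcon
  have hmono : Monotone (fun k : ℕ => Set.Iic ((k:ℝ))) := by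
    intro i j hij
    apply Set.Iic_subset_Iic.2
    exact_mod_cast hij
  have huniv : (⋃ k : ℕ, Set.Iic ((k:ℝ))) = Set.univ := by
    ext x
    simp only [Set.mem_iUnion, Set.mem_Iic, Set.mem_univ, iff_true]
    obtain ⟨k, hk⟩ := exists_nat_gt x
    exact ⟨k, hk.le⟩
  have hm := hmono.measure_iUnion (μ := gaussNu)
  rw [huniv, gaussNu_univ] at hm
  have hle : (1 : ℝ≥0∞) ≤ ENNReal.ofReal t := by
    rw [hm]
    apply iSup_le
    intro k
    rw [gaussNu_Iic]
    exact ENNReal.ofReal_le_ofReal (hcon _)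
  exact absurd hle (not_le.2 (ENNReal.ofReal_lt_one.2 ht))

lemma gaussCdf_exists_iff (t : ℝ) :
    (∃ r, gaussCdf r = t) ↔ t ∈ Set.Ioo (0:ℝ) 1 := by
  constructor
  · rintro ⟨r, rfl⟩
    exact ⟨gaussCdf_pos r, gaussCdf_lt_one r⟩
  · rintro ⟨h0, h1⟩
    obtain ⟨r1, hr1⟩ := exists_gaussCdf_lt h0
    obtain ⟨r2, hr2⟩ := exists_lt_gaussCdf h1
    have hr : r1 ≤ r2 := by
      by_contra hc
      push_neg at hc
      have := gaussCdf_mono hc.le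
      linarith
    obtain ⟨x, _, hx⟩ := intermediate_value_Icc hr continuous_gaussCdf.continuousOn
      ⟨hr1.le, hr2.le⟩
    exact ⟨x, hx⟩

end B

section C
open Set
open scoped ENNReal

lemma gaussCdf_gaussCdfInv {t : ℝ} (ht : t ∈ Set.Ioo (0:ℝ) 1) :
    gaussCdf (gaussCdfInv t) = t :=
  Function.invFun_eq ((gaussCdf_exists_iff t).2 ht)

lemma gaussCdfInv_of_not_mem {t : ℝ} (ht : t ∉ Set.Ioo (0:ℝ) 1) :
    gaussCdfInv t = Classical.arbitrary ℝ := by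
  unfold gaussCdfInv Function.invFun
  rw [dif_neg]
  exact fun h => ht ((gaussCdf_exists_iff t).1 h)

lemma gaussCdfInv_le {t u : ℝ} (ht : t ∈ Set.Ioo (0:ℝ) 1) (hu : u ∈ Set.Ioo (0:ℝ) 1)
    (htu : t ≤ u) : gaussCdfInv t ≤ gaussCdfInv u := by
  by_contra h
  push_neg at h
  have h2 := gaussCdf_strictMono h
  rw [gaussCdf_gaussCdfInv hu, gaussCdf_gaussCdfInv ht] at h2
  linarith

lemma Igauss_nonneg (t : ℝ) : 0 ≤ Igauss t := by
  unfold Igauss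
  split
  · exact le_rfl
  · exact (gaussPdf_pos _).le

lemma Igauss_eq {t : ℝ} (ht : t ∈ Set.Ioo (0:ℝ) 1) :
    Igauss t = gaussPdf (gaussCdfInv t) := by
  unfold Igauss
  rw [if_neg]
  rintro (h | h) <;> rw [h] at ht <;> simp at ht <;> linarith [ht]

lemma Igauss_pos {t : ℝ} (ht : t ∈ Set.Ioo (0:ℝ) 1) : 0 < Igauss t := by
  rw [Igauss_eq ht]; exact gaussPdf_pos _

lemma Igauss_zero : Igauss 0 = 0 := by unfold Igauss; rw [if_pos (Or.inl rfl)]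

lemma gaussPdf_min {y y1 y2 : ℝ} (h1 : y1 ≤ y) (h2 : y ≤ y2) :
    min (gaussPdf y1) (gaussPdf y2) ≤ gaussPdf y := by
  have hc : (0:ℝ) ≤ (2 * Real.pi) ^ (-(1:ℝ)/2) :=
    (Real.rpow_pos_of_pos (by positivity) _).le
  have hmax : y^2 ≤ max (y1^2) (y2^2) := by
    rcases le_or_gt 0 y with hy | hy
    · exact le_max_of_le_right (by nlinarith)
    · exact le_max_of_le_left (by nlinarith)
  rcases max_cases (y1^2) (y2^2) with ⟨heq, _⟩ | ⟨heq, _⟩ <;> rw [heq] at hmax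
  · refine le_trans (min_le_left _ _) ?_
    unfold gaussPdf
    gcongr
  · refine le_trans (min_le_right _ _) ?_
    unfold gaussPdf
    gcongr

lemma Igauss_min_le {p q v : ℝ} (hp : p ∈ Set.Ioo (0:ℝ) 1) (hq : q ∈ Set.Ioo (0:ℝ) 1)
    (hpv : p ≤ v) (hvq : v ≤ q) : min (Igauss p) (Igauss q) ≤ Igauss v := by
  have hv : v ∈ Set.Ioo (0:ℝ) 1 := ⟨lt_of_lt_of_le hp.1 hpv, lt_of_le_of_lt hvq hq.2⟩
  rw [Igauss_eq hp, Igauss_eq hq, Igauss_eq hv]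
  exact gaussPdf_min (gaussCdfInv_le hp hv hpv) (gaussCdfInv_le hv hq hvq)

noncomputable def sigmaMap (x : ℝ) : ℝ := 1/2 + x / (2 * (1 + |x|))

noncomputable def tauMap (y : ℝ) : ℝ := (2*y - 1) / (1 - |2*y - 1|)

lemma sigmaMap_mono : Monotone sigmaMap := by
  intro x y hxy
  unfold sigmaMap
  have hx : (0:ℝ) < 2 * (1 + |x|) := by positivity
  have hy : (0:ℝ) < 2 * (1 + |y|) := by positivity
  have hkey : x * (2 * (1 + |y|)) ≤ y * (2 * (1 + |x|)) := by
    rcases abs_cases x with ⟨hx1, hx2⟩ <;> rcases abs_cases y with ⟨hy1, hy2⟩ <;> nlinarith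
  have := (div_le_div_iff₀ hx hy).2 hkey
  linarith

lemma sigmaMap_mem (x : ℝ) : sigmaMap x ∈ Set.Ioo (0:ℝ) 1 := by
  unfold sigmaMap
  have h : |x / (2 * (1 + |x|))| < 1/2 := by
    rw [abs_div, abs_of_pos (by positivity : (0:ℝ) < 2 * (1 + |x|)), div_lt_iff₀ (by positivity)]
    nlinarith [abs_nonneg x]
  have h2 := abs_lt.1 h
  constructor <;> [linarith [h2.1]; linarith [h2.2]]

lemma measurable_tauMap : Measurable tauMap := by
  unfold tauMap
  apply Measurable.div
  · fun_prop
  · fun_prop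

lemma sigmaMap_tauMap {t : ℝ} (ht : t ∈ Set.Ioo (0:ℝ) 1) : sigmaMap (tauMap t) = t := by
  obtain ⟨h0, h1⟩ := ht
  have hz1 : |2*t - 1| < 1 := abs_lt.2 ⟨by linarith, by linarith⟩
  have hd : 0 < 1 - |2*t - 1| := by linarith
  unfold sigmaMap tauMap
  have habs : |(2*t - 1) / (1 - |2*t - 1|)| = |2*t - 1| / (1 - |2*t - 1|) := by
    rw [abs_div, abs_of_pos hd]
  rw [habs]
  have h2 : 1 + |2*t - 1| / (1 - |2*t - 1|) = 1 / (1 - |2*t - 1|) := by field_simp; ring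
  rw [h2]
  have key : (2*t - 1) / (1 - |2*t - 1|) / (2 * (1 / (1 - |2*t - 1|))) = (2*t - 1)/2 := by
    field_simp
  rw [key]
  ring

lemma measurable_gaussCdfInv : Measurable gaussCdfInv := by
  have hmono : Monotone (gaussCdfInv ∘ sigmaMap) := fun x y hxy =>
    gaussCdfInv_le (sigmaMap_mem x) (sigmaMap_mem y) (sigmaMap_mono hxy)
  have hmeas : Measurable (gaussCdfInv ∘ sigmaMap) := hmono.measurable
  have heq : gaussCdfInv = Set.piecewise (Set.Ioo (0:ℝ) 1)
      (fun t => (gaussCdfInv ∘ sigmaMap) (tauMap t)) (fun _ => Classical.arbitrary ℝ) := by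
    funext t
    by_cases ht : t ∈ Set.Ioo (0:ℝ) 1
    · rw [Set.piecewise_eq_of_mem _ _ _ ht]
      simp only [Function.comp_apply]
      rw [sigmaMap_tauMap ht]
    · rw [Set.piecewise_eq_of_notMem _ _ _ ht, gaussCdfInv_of_not_mem ht]
  rw [heq]
  exact Measurable.piecewise measurableSet_Ioo (hmeas.comp measurable_tauMap) measurable_const

lemma measurable_Igauss : Measurable Igauss := by
  have heq : Igauss = Set.piecewise ({0, 1} : Set ℝ) (fun _ => 0)
      (fun t => gaussPdf (gaussCdfInv t)) := by
    funext t
    by_cases ht : t = 0 ∨ t = 1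
    · rw [Set.piecewise_eq_of_mem _ _ _ (by simpa using ht)]
      unfold Igauss
      rw [if_pos ht]
    · rw [Set.piecewise_eq_of_notMem _ _ _ (by simpa using ht)]
      unfold Igauss
      rw [if_neg ht]
  rw [heq]
  exact Measurable.piecewise ((measurableSet_singleton (1:ℝ)).insert 0) measurable_const
    (continuous_gaussPdf.measurable.comp measurable_gaussCdfInv)

end C

section D
open Set
open scoped ENNReal

instance gaussMeasure_prob (n : ℕ) : IsProbabilityMeasure (gaussMeasure n) := by
  unfold gaussMeasure; infer_instance

variable {n : ℕ} {F : (Fin n → ℝ) → ℝ}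

lemma measSet_abs (hF : Measurable F) (t : ℝ) : MeasurableSet {x : Fin n → ℝ | t < |F x|} :=
  measurableSet_lt measurable_const hF.abs

lemma distFun_nonneg (t : ℝ) : 0 ≤ distFun n F t := ENNReal.toReal_nonneg

lemma distFun_le_one (t : ℝ) : distFun n F t ≤ 1 := by
  unfold distFun
  have h := measure_mono (Set.subset_univ {x : Fin n → ℝ | t < |F x|}) (μ := gaussMeasure n)
  rw [measure_univ] at h
  simpa using ENNReal.toReal_mono (by simp) h

lemma distFun_anti : Antitone (distFun n F) := by
  intro t1 t2 h
  unfold distFun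
  exact ENNReal.toReal_mono (measure_ne_top _ _)
    (measure_mono fun x hx => lt_of_le_of_lt h hx)

lemma distFun_ofReal (t : ℝ) :
    ENNReal.ofReal (distFun n F t) = gaussMeasure n {x | t < |F x|} :=
  ENNReal.ofReal_toReal (measure_ne_top _ _)

lemma exists_distFun_le (hF : Measurable F) {ε : ℝ} (hε : 0 < ε) :
    ∃ t : ℝ, 0 ≤ t ∧ distFun n F t ≤ ε := by
  have hint : (⋂ k : ℕ, {x : Fin n → ℝ | (k:ℝ) < |F x|}) = ∅ := by
    ext x
    simp only [Set.mem_iInter, Set.mem_setOf_eq, Set.mem_empty_iff_false, iff_false]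
    push_neg
    obtain ⟨k, hk⟩ := exists_nat_gt |F x|
    exact ⟨k, hk.le⟩
  have hanti : Antitone (fun k : ℕ => {x : Fin n → ℝ | (k:ℝ) < |F x|}) := by
    intro i j hij x hx
    simp only [Set.mem_setOf_eq] at hx ⊢
    have : (i:ℝ) ≤ (j:ℝ) := by exact_mod_cast hij
    linarith
  have hm := hanti.measure_iInter (μ := gaussMeasure n)
    (fun k => (measSet_abs hF _).nullMeasurableSet) ⟨0, measure_ne_top _ _⟩
  rw [hint, measure_empty] at hm
  have h2 : ⨅ k : ℕ, gaussMeasure n {x : Fin n → ℝ | (k:ℝ) < |F x|} < ENNReal.ofReal ε := by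
    rw [← hm]; exact ENNReal.ofReal_pos.2 hε
  obtain ⟨k, hk⟩ := iInf_lt_iff.1 h2
  refine ⟨k, Nat.cast_nonneg k, ?_⟩
  unfold distFun
  exact (ENNReal.toReal_le_of_le_ofReal hε.le hk.le)

lemma rearr_nonneg (s : ℝ) : 0 ≤ rearr n F s :=
  Real.sInf_nonneg fun t ht => ht.1

lemma rearr_bddBelow (s : ℝ) : BddBelow {t : ℝ | 0 ≤ t ∧ distFun n F t ≤ s} :=
  ⟨0, fun y hy => hy.1⟩

lemma rearr_le {s t : ℝ} (ht : 0 ≤ t) (h : distFun n F t ≤ s) : rearr n F s ≤ t :=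
  csInf_le (rearr_bddBelow s) ⟨ht, h⟩

lemma distFun_rearr_le (hF : Measurable F) {s t : ℝ} (hs : 0 < s) (h : rearr n F s ≤ t) :
    distFun n F t ≤ s := by
  have step : ∀ ε : ℝ, 0 < ε → distFun n F (t + ε) ≤ s := by
    intro ε hε
    have hne : {u : ℝ | 0 ≤ u ∧ distFun n F u ≤ s}.Nonempty := by
      obtain ⟨u, hu0, hu⟩ := exists_distFun_le hF hs
      exact ⟨u, hu0, hu⟩
    have hlt : sInf {u : ℝ | 0 ≤ u ∧ distFun n F u ≤ s} < t + ε :=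
      lt_of_le_of_lt h (by linarith)
    obtain ⟨u, hu, hult⟩ := exists_lt_of_csInf_lt hne hlt
    exact le_trans (distFun_anti (le_of_lt hult)) hu.2
  have hun : {x : Fin n → ℝ | t < |F x|}
      = ⋃ k : ℕ, {x : Fin n → ℝ | t + 1/((k:ℝ)+1) < |F x|} := by
    ext x
    simp only [Set.mem_setOf_eq, Set.mem_iUnion]
    constructor
    · intro hx
      obtain ⟨k, hk⟩ := exists_nat_one_div_lt (sub_pos.2 hx)
      refine ⟨k, ?_⟩
      have : 1/((k:ℝ)+1) < |F x| - t := by exact_mod_cast hk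
      linarith
    · rintro ⟨k, hk⟩
      have : (0:ℝ) < 1/((k:ℝ)+1) := by positivity
      linarith
  have hmono2 : Monotone (fun k : ℕ => {x : Fin n → ℝ | t + 1/((k:ℝ)+1) < |F x|}) := by
    intro i j hij x hx
    simp only [Set.mem_setOf_eq] at hx ⊢
    have hc : (i:ℝ) ≤ (j:ℝ) := by exact_mod_cast hij
    have h1 : 1/((j:ℝ)+1) ≤ 1/((i:ℝ)+1) := by gcongr
    linarith
  have hm := hmono2.measure_iUnion (μ := gaussMeasure n)
  unfold distFun
  rw [hun, hm]
  apply ENNReal.toReal_le_of_le_ofReal hs.le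
  apply iSup_le
  intro k
  have hst := step (1/((k:ℝ)+1)) (by positivity)
  unfold distFun at hst
  rw [← distFun_ofReal (F := F) (t + 1/((k:ℝ)+1))]
  exact ENNReal.ofReal_le_ofReal hst

lemma lt_distFun_of_lt_rearr {s t : ℝ} (ht : 0 ≤ t) (h : t < rearr n F s) :
    s < distFun n F t := by
  by_contra hc
  push_neg at hc
  exact absurd (rearr_le ht hc) (not_le.2 h)

lemma rearr_anti (hF : Measurable F) {s1 s2 : ℝ} (h1 : 0 < s1) (h12 : s1 ≤ s2) :
    rearr n F s2 ≤ rearr n F s1 := by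
  apply csInf_le_csInf (rearr_bddBelow s2)
  · obtain ⟨u, hu0, hu⟩ := exists_distFun_le hF h1
    exact ⟨u, hu0, hu⟩
  · rintro u ⟨hu0, hu⟩
    exact ⟨hu0, le_trans hu h12⟩

lemma rearr_le_of_distFun_zero {M : ℝ} (hM0 : 0 ≤ M) (hM : distFun n F M = 0) {s : ℝ}
    (hs : 0 ≤ s) : rearr n F s ≤ M :=
  rearr_le hM0 (by rw [hM]; exact hs)

lemma rearr_antiOn_of_bound {M : ℝ} (hM0 : 0 ≤ M) (hM : distFun n F M = 0) :
    AntitoneOn (rearr n F) (Set.Ici 0) := by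
  intro s1 h1 s2 h2 h12
  exact csInf_le_csInf (rearr_bddBelow s2)
    ⟨M, ⟨hM0, by rw [hM]; exact h1⟩⟩ (fun u hu => ⟨hu.1, le_trans hu.2 h12⟩)

end D

section E
open Set
open scoped ENNReal

lemma hl_ineq {n : ℕ} {w : (Fin n → ℝ) → ℝ} (hw : Measurable w) (hw0 : ∀ x, 0 ≤ w x)
    {K : ℝ} (hK0 : 0 ≤ K) (hwK : ∀ x, w x ≤ K) {E : Set (Fin n → ℝ)} (hE : MeasurableSet E)
    {h : ℝ} (hh : 0 < h) (hEh : gaussMeasure n E ≤ ENNReal.ofReal h) :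
    ∫ x in E, w x ∂gaussMeasure n ≤ ∫ t in (0:ℝ)..h, rearr n w t := by
  set μ := gaussMeasure n with hμ
  have hKd : distFun n w K = 0 := by
    unfold distFun
    have : {x : Fin n → ℝ | K < |w x|} = ∅ := by
      ext x
      simp only [Set.mem_setOf_eq, Set.mem_empty_iff_false, iff_false, not_lt]
      rw [abs_of_nonneg (hw0 x)]
      exact hwK x
    rw [this, measure_empty, ENNReal.toReal_zero]
  set W : ℝ → ℝ := fun t => rearr n w (max t 0) with hW
  have hWanti : Antitone W := by
    intro t1 t2 h12
    exact rearr_antiOn_of_bound hK0 hKd (Set.mem_Ici.2 (le_max_right _ _)) (Set.mem_Ici.2 (le_max_right _ _))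
      (max_le_max h12 le_rfl)
  have hWm : Measurable W := hWanti.measurable
  have hW0 : ∀ t, 0 ≤ W t := fun t => rearr_nonneg _
  have hwset : ∀ t : ℝ, MeasurableSet {x : Fin n → ℝ | t < w x} :=
    fun t => measurableSet_lt measurable_const hw
  have hWset : ∀ t : ℝ, MeasurableSet {s : ℝ | t < W s} :=
    fun t => measurableSet_lt measurable_const hWm
  -- volume computation
  have hvol : ∀ t : ℝ, 0 < t →
      volume ({s : ℝ | t < W s} ∩ Set.Ioc 0 h) = ENNReal.ofReal (min h (distFun n w t)) := by
    intro t ht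
    have hiff : ∀ s : ℝ, s ∈ Set.Ioc (0:ℝ) h → (t < W s ↔ s < distFun n w t) := by
      intro s hs
      have hWs : W s = rearr n w s := by rw [hW]; simp only; rw [max_eq_left hs.1.le]
      rw [hWs]
      constructor
      · intro hlt
        by_contra hc
        push_neg at hc
        exact absurd (rearr_le ht.le hc) (not_le.2 hlt)
      · intro hlt
        by_contra hc
        push_neg at hc
        exact absurd (distFun_rearr_le hw hs.1 hc) (not_le.2 hlt)
    rcases le_or_gt (distFun n w t) h with hcase | hcase
    · have hseteq : {s : ℝ | t < W s} ∩ Set.Ioc 0 h = Set.Ioo 0 (distFun n w t) := by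
        ext s
        simp only [Set.mem_inter_iff, Set.mem_setOf_eq, Set.mem_Ioc, Set.mem_Ioo]
        constructor
        · rintro ⟨h1, h2⟩
          exact ⟨h2.1, (hiff s h2).1 h1⟩
        · rintro ⟨h1, h2⟩
          have hsh : s ≤ h := le_trans h2.le hcase
          exact ⟨(hiff s ⟨h1, hsh⟩).2 h2, ⟨h1, hsh⟩⟩
      rw [hseteq, Real.volume_Ioo, min_eq_right hcase, sub_zero]
    · have hseteq : {s : ℝ | t < W s} ∩ Set.Ioc 0 h = Set.Ioc 0 h := by
        ext s
        simp only [Set.mem_inter_iff, Set.mem_setOf_eq, Set.mem_Ioc]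
        constructor
        · rintro ⟨_, h2⟩; exact h2
        · intro hs
          exact ⟨(hiff s hs).2 (lt_of_le_of_lt hs.2 hcase), hs⟩
      rw [hseteq, Real.volume_Ioc, min_eq_left hcase.le, sub_zero]
  -- pointwise measure bound
  have hpt : ∀ t ∈ Set.Ioi (0:ℝ), μ ({x | t < w x} ∩ E)
      ≤ volume ({s : ℝ | t < W s} ∩ Set.Ioc 0 h) := by
    intro t ht
    rw [hvol t ht]
    rcases le_total h (distFun n w t) with hc | hc
    · rw [min_eq_left hc]
      exact le_trans (measure_mono Set.inter_subset_right) hEh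
    · rw [min_eq_right hc]
      rw [distFun_ofReal]
      refine le_trans (measure_mono Set.inter_subset_left) (le_of_eq ?_)
      congr 1
      ext x
      simp [abs_of_nonneg (hw0 x)]
  -- LHS = toReal of lintegral
  have hL1 : ∫ x in E, w x ∂μ = (∫⁻ t in Set.Ioi (0:ℝ), μ ({x | t < w x} ∩ E)).toReal := by
    rw [integral_eq_lintegral_of_nonneg_ae (Filter.Eventually.of_forall hw0)
      hw.aestronglyMeasurable.restrict]
    congr 1
    rw [lintegral_eq_lintegral_meas_lt _ (Filter.Eventually.of_forall hw0) hw.aemeasurable]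
    apply lintegral_congr
    intro t
    rw [Measure.restrict_apply (hwset t)]
  -- RHS = toReal of lintegral
  have hR1 : ∫ t in (0:ℝ)..h, rearr n w t
      = (∫⁻ t in Set.Ioi (0:ℝ), volume ({s : ℝ | t < W s} ∩ Set.Ioc 0 h)).toReal := by
    rw [intervalIntegral.integral_of_le hh.le]
    have hcongr : ∫ t in Set.Ioc (0:ℝ) h, rearr n w t = ∫ t in Set.Ioc (0:ℝ) h, W t := by
      apply setIntegral_congr_fun measurableSet_Ioc
      intro t ht
      rw [hW]
      simp only
      rw [max_eq_left ht.1.le]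
    rw [hcongr]
    rw [integral_eq_lintegral_of_nonneg_ae (Filter.Eventually.of_forall hW0)
      hWm.aestronglyMeasurable.restrict]
    congr 1
    rw [lintegral_eq_lintegral_meas_lt _ (Filter.Eventually.of_forall hW0) hWm.aemeasurable]
    apply lintegral_congr
    intro t
    rw [Measure.restrict_apply (hWset t)]
  -- finiteness of RHS lintegral
  have hfin : (∫⁻ t in Set.Ioi (0:ℝ), volume ({s : ℝ | t < W s} ∩ Set.Ioc 0 h)) ≠ ⊤ := by
    have hb : ∀ t ∈ Set.Ioi (0:ℝ), volume ({s : ℝ | t < W s} ∩ Set.Ioc 0 h)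
        ≤ (Set.Ioc (0:ℝ) K).indicator (fun _ => ENNReal.ofReal h) t := by
      intro t ht
      rw [hvol t ht]
      by_cases htK : t ≤ K
      · have hmem : t ∈ Set.Ioc (0:ℝ) K := ⟨ht, htK⟩
        rw [Set.indicator_of_mem hmem]
        exact ENNReal.ofReal_le_ofReal (min_le_left _ _)
      · push_neg at htK
        have hd0 : distFun n w t = 0 :=
          le_antisymm (hKd ▸ distFun_anti htK.le) (distFun_nonneg t)
        rw [hd0, min_eq_right (le_of_lt hh), ENNReal.ofReal_zero]
        exact zero_le
    have := setLIntegral_mono' (μ := volume) measurableSet_Ioi hb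
    refine ne_top_of_le_ne_top ?_ this
    refine ne_top_of_le_ne_top ?_ (setLIntegral_le_lintegral _ _)
    rw [lintegral_indicator measurableSet_Ioc, setLIntegral_const]
    exact ENNReal.mul_ne_top ENNReal.ofReal_ne_top (by simp [Real.volume_Ioc])
  rw [hL1, hR1]
  apply ENNReal.toReal_mono hfin
  exact setLIntegral_mono' measurableSet_Ioi hpt

end E

section F
open Set
open scoped ENNReal NNReal

lemma Igauss_le_const (t : ℝ) : Igauss t ≤ (2 * Real.pi) ^ (-(1:ℝ)/2) := by
  unfold Igauss
  split
  · exact (Real.rpow_pos_of_pos (by positivity) _).le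
  · exact gaussPdf_le _

lemma clamp_lipschitz (a b : ℝ) : LipschitzWith 1 (fun y : ℝ => min (max y a) b - a) := by
  apply LipschitzWith.of_dist_le_mul
  intro y1 y2
  rw [Real.dist_eq, Real.dist_eq]
  have h1 : (min (max y1 a) b - a) - (min (max y2 a) b - a)
      = min (max y1 a) b - min (max y2 a) b := by ring
  rw [h1]
  calc |min (max y1 a) b - min (max y2 a) b|
      ≤ max |max y1 a - max y2 a| |b - b| := abs_min_sub_min_le_max _ _ _ _
    _ ≤ |y1 - y2| := by
        rw [sub_self, abs_zero]
        exact max_le (abs_max_sub_max_le_abs _ _ _) (abs_nonneg _)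
    _ ≤ (1:ℝ≥0) * |y1 - y2| := by simp

lemma part1_core {n : ℕ}
    (hled : ∀ g : (Fin n → ℝ) → ℝ, (∃ K, LipschitzWith K g) →
      (∫ u in Set.Ioi (0:ℝ), Igauss (distFun n g u)) ≤ ∫ x, gradNorm n g x ∂gaussMeasure n)
    (f : (Fin n → ℝ) → ℝ) {K : ℝ≥0} (hK : LipschitzWith K f)
    {s h : ℝ} (hs : 0 < s) (hh : 0 < h) (hsh : s + h < 1) :
    (rearr n f s - rearr n f (s + h)) * min (Igauss (s + h)) (Igauss s) ≤
      ∫ t in (0:ℝ)..h, rearr n (gradNorm n f) t := by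
  have hfc : Continuous f := hK.continuous
  have hfm : Measurable f := hfc.measurable
  set w : (Fin n → ℝ) → ℝ := gradNorm n f with hwdef
  have hwm : Measurable w := (measurable_fderiv ℝ f).norm
  have hw0 : ∀ x, 0 ≤ w x := fun x => norm_nonneg _
  have hwK : ∀ x, w x ≤ (K:ℝ) := fun x => norm_fderiv_le_of_lipschitz ℝ hK
  set b := rearr n f s with hbdef
  set a := rearr n f (s + h) with hadef
  have ha0 : 0 ≤ a := rearr_nonneg _
  have hb0 : 0 ≤ b := rearr_nonneg _
  have hab : a ≤ b := rearr_anti hfm hs (by linarith)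
  set m := min (Igauss (s + h)) (Igauss s) with hmdef
  have hsIoo : s ∈ Set.Ioo (0:ℝ) 1 := ⟨hs, by linarith⟩
  have hshIoo : s + h ∈ Set.Ioo (0:ℝ) 1 := ⟨by linarith, hsh⟩
  have hm0 : 0 ≤ m := le_min (Igauss_nonneg _) (Igauss_nonneg _)
  have hRHS0 : 0 ≤ ∫ t in (0:ℝ)..h, rearr n w t :=
    intervalIntegral.integral_nonneg hh.le (fun u _ => rearr_nonneg _)
  rcases eq_or_lt_of_le hab with heq | hab'
  · rw [← heq]
    simpa using hRHS0
  -- main case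
  set g : (Fin n → ℝ) → ℝ := fun x => min (max (|f x|) a) b - a with hgdef
  have hg0 : ∀ x, 0 ≤ g x := by
    intro x
    have : a ≤ min (max (|f x|) a) b := le_min (le_max_right _ _) hab
    simp only [hgdef]
    linarith
  have hgle : ∀ x, g x ≤ b - a := by
    intro x
    have : min (max (|f x|) a) b ≤ b := min_le_right _ _
    simp only [hgdef]
    linarith
  have habs_lip : LipschitzWith 1 (fun y : ℝ => |y|) := by
    have := lipschitzWith_one_norm (E := ℝ)
    exact this
  have hglip : ∃ K' : ℝ≥0, LipschitzWith K' g :=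
    ⟨1 * (1 * K), ((clamp_lipschitz a b).comp (habs_lip.comp hK))⟩
  -- pointwise gradient identity
  set E : Set (Fin n → ℝ) := {x | a < |f x|} ∩ {x | |f x| < b} with hEdef
  have hEmeas : MeasurableSet E :=
    (measurableSet_lt measurable_const hfm.abs).inter
      (measurableSet_lt hfm.abs measurable_const)
  have hgrad : ∀ x, gradNorm n g x = E.indicator w x := by
    intro x
    rcases le_or_gt (|f x|) a with hxa | hxa
    · -- local minimum, gradient zero
      have hgx : g x = 0 := by
        simp only [hgdef]
        rw [max_eq_right hxa, min_eq_left hab]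
        ring
      have hmin : IsLocalMin g x := by
        apply Filter.Eventually.of_forall
        intro y
        rw [hgx]
        exact hg0 y
      have : fderiv ℝ g x = 0 := hmin.fderiv_eq_zero
      have hx : x ∉ E := fun hx => absurd hx.1 (not_lt.2 hxa)
      rw [Set.indicator_of_notMem hx]
      unfold gradNorm
      rw [this, norm_zero]
    rcases le_or_gt b (|f x|) with hxb | hxb
    · -- local maximum
      have hgx : g x = b - a := by
        simp only [hgdef]
        rw [max_eq_left (le_trans hab hxb), min_eq_right hxb]
      have hmax : IsLocalMax g x := by
        apply Filter.Eventually.of_forall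
        intro y
        rw [hgx]
        exact hgle y
      have : fderiv ℝ g x = 0 := hmax.fderiv_eq_zero
      have hx : x ∉ E := fun hx => absurd hx.2 (not_lt.2 hxb)
      rw [Set.indicator_of_notMem hx]
      unfold gradNorm
      rw [this, norm_zero]
    · -- middle region
      have hxE : x ∈ E := ⟨hxa, hxb⟩
      rw [Set.indicator_of_mem hxE]
      rcases lt_trichotomy (f x) 0 with hfx | hfx | hfx
      · -- f x < 0
        have habs : |f x| = -f x := abs_of_neg hfx
        have hmem : x ∈ f ⁻¹' (Set.Ioo (-b) (-a)) := by
          simp only [Set.mem_preimage, Set.mem_Ioo]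
          constructor <;> [linarith [habs ▸ hxb]; linarith [habs ▸ hxa]]
        have hopen : IsOpen (f ⁻¹' (Set.Ioo (-b) (-a))) := isOpen_Ioo.preimage hfc
        have hev : g =ᶠ[nhds x] fun y => -f y - a := by
          apply Filter.eventually_of_mem (hopen.mem_nhds hmem)
          intro y hy
          simp only [Set.mem_preimage, Set.mem_Ioo] at hy
          have hy2 : |f y| = -f y := abs_of_neg (by linarith)
          simp only [hgdef]
          rw [hy2, max_eq_left (by linarith), min_eq_left (by linarith)]
        have h1 : fderiv ℝ g x = fderiv ℝ (fun y => -f y - a) x := hev.fderiv_eq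
        have h2 : fderiv ℝ (fun y => -f y - a) x = fderiv ℝ (fun y => -f y) x :=
          fderiv_sub_const a
        have h3 : fderiv ℝ (fun y => -f y) x = -fderiv ℝ f x := fderiv_neg
        unfold gradNorm
        rw [h1, h2, h3, norm_neg]
        rfl
      · exfalso
        rw [hfx, abs_zero] at hxa
        exact absurd hxa (not_lt.2 ha0)
      · -- f x > 0
        have habs : |f x| = f x := abs_of_pos hfx
        have hmem : x ∈ f ⁻¹' (Set.Ioo a b) := by
          simp only [Set.mem_preimage, Set.mem_Ioo]
          constructor <;> [linarith [habs ▸ hxa]; linarith [habs ▸ hxb]]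
        have hopen : IsOpen (f ⁻¹' (Set.Ioo a b)) := isOpen_Ioo.preimage hfc
        have hev : g =ᶠ[nhds x] fun y => f y - a := by
          apply Filter.eventually_of_mem (hopen.mem_nhds hmem)
          intro y hy
          simp only [Set.mem_preimage, Set.mem_Ioo] at hy
          have hy2 : |f y| = f y := abs_of_pos (by linarith)
          simp only [hgdef]
          rw [hy2, max_eq_left (by linarith), min_eq_left (by linarith)]
        have h1 : fderiv ℝ g x = fderiv ℝ (fun y => f y - a) x := hev.fderiv_eq
        have h2 : fderiv ℝ (fun y => f y - a) x = fderiv ℝ f x := fderiv_sub_const a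
        unfold gradNorm
        rw [h1, h2]
        rfl
  -- measure of E
  have hEh : gaussMeasure n E ≤ ENNReal.ofReal h := by
    set Sb : Set (Fin n → ℝ) := {x | b ≤ |f x|} with hSbdef
    have hSbmeas : MeasurableSet Sb := measurableSet_le measurable_const hfm.abs
    have hunion : E ∪ Sb = {x | a < |f x|} := by
      ext x
      simp only [hEdef, hSbdef, Set.mem_union, Set.mem_inter_iff, Set.mem_setOf_eq]
      constructor
      · rintro (⟨h1, _⟩ | h1)
        · exact h1
        · exact lt_of_lt_of_le hab' h1
      · intro h1
        rcases lt_or_ge (|f x|) b with h2 | h2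
        · exact Or.inl ⟨h1, h2⟩
        · exact Or.inr h2
    have hdisj : Disjoint E Sb := by
      rw [Set.disjoint_left]
      rintro x ⟨_, h2⟩ h3
      simp only [hSbdef, Set.mem_setOf_eq] at h3
      simp only [Set.mem_setOf_eq] at h2
      linarith
    have hSa : gaussMeasure n {x | a < |f x|} ≤ ENNReal.ofReal (s + h) := by
      rw [← distFun_ofReal]
      exact ENNReal.ofReal_le_ofReal (distFun_rearr_le hfm (by linarith) le_rfl)
    have hSb : ENNReal.ofReal s ≤ gaussMeasure n Sb := by
      have hiInter : (⋂ k : ℕ, {x : Fin n → ℝ | b - b/((k:ℝ)+1) < |f x|}) = Sb := by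
        ext x
        simp only [Set.mem_iInter, Set.mem_setOf_eq, hSbdef]
        constructor
        · intro hx
          by_contra hc
          push_neg at hc
          have hpos : 0 < (b - |f x|)/b := by
            apply div_pos (by linarith) (by linarith)
          obtain ⟨k, hk⟩ := exists_nat_one_div_lt hpos
          have hk' : (1:ℝ)/((k:ℝ)+1) < (b - |f x|)/b := by exact_mod_cast hk
          have hb' : (0:ℝ) < b := by linarith
          have h2 : b/((k:ℝ)+1) < b - |f x| := by
            calc b/((k:ℝ)+1) = b * (1/((k:ℝ)+1)) := (mul_one_div b _).symm
              _ < b * ((b - |f x|)/b) := by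
                  exact mul_lt_mul_of_pos_left hk' hb'
              _ = b - |f x| := by field_simp
          have := hx k
          linarith
        · intro hx k
          have h1 : 0 < b/((k:ℝ)+1) := by
            apply div_pos (by linarith) (by positivity)
          linarith
      have hanti : Antitone (fun k : ℕ => {x : Fin n → ℝ | b - b/((k:ℝ)+1) < |f x|}) := by
        intro i j hij x hx
        simp only [Set.mem_setOf_eq] at hx ⊢
        have hc : (i:ℝ) ≤ (j:ℝ) := by exact_mod_cast hij
        have h1 : b/((j:ℝ)+1) ≤ b/((i:ℝ)+1) := by
          apply div_le_div_of_nonneg_left (by linarith) (by positivity) (by linarith)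
        linarith
      have hm := hanti.measure_iInter (μ := gaussMeasure n)
        (fun k => (measSet_abs hfm _).nullMeasurableSet) ⟨0, measure_ne_top _ _⟩
      rw [hiInter] at hm
      rw [hm]
      apply le_iInf
      intro k
      have htk0 : 0 ≤ b - b/((k:ℝ)+1) := by
        have : b/((k:ℝ)+1) ≤ b/1 := by
          apply div_le_div_of_nonneg_left hb0 (by norm_num) (by push_cast; linarith)
        simp at this
        linarith
      have htkb : b - b/((k:ℝ)+1) < b := by
        have : 0 < b/((k:ℝ)+1) := div_pos (by linarith) (by positivity)
        linarith
      have hlt := lt_distFun_of_lt_rearr (F := f) htk0 htkb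
      rw [← distFun_ofReal]
      exact ENNReal.ofReal_le_ofReal hlt.le
    have hsum : gaussMeasure n E + gaussMeasure n Sb ≤ ENNReal.ofReal (s + h) := by
      rw [← measure_union hdisj hSbmeas, hunion]
      exact hSa
    have hE1 : gaussMeasure n E ≤ ENNReal.ofReal (s + h) - ENNReal.ofReal s := by
      apply ENNReal.le_sub_of_add_le_right ENNReal.ofReal_ne_top
      exact le_trans (add_le_add_right hSb _) hsum
    calc gaussMeasure n E ≤ ENNReal.ofReal (s + h) - ENNReal.ofReal s := hE1
      _ = ENNReal.ofReal h := by
          rw [← ENNReal.ofReal_sub _ hs.le]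
          norm_num
  -- distribution function of g
  have hgabs : ∀ x, |g x| = g x := fun x => abs_of_nonneg (hg0 x)
  have hdg : ∀ u : ℝ, 0 < u → u < b - a → distFun n g u = distFun n f (a + u) := by
    intro u hu hub
    unfold distFun
    congr 2
    ext x
    simp only [Set.mem_setOf_eq]
    rw [hgabs x]
    simp only [hgdef]
    constructor
    · intro hx
      have h1 : a + u < min (max (|f x|) a) b := by linarith
      have h2 := lt_of_lt_of_le h1 (min_le_left _ _)
      rcases max_cases (|f x|) a with ⟨hm1, _⟩ | ⟨hm1, _⟩
      · rwa [hm1] at h2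
      · rw [hm1] at h2; linarith
    · intro hx
      have h1 : a + u < max (|f x|) a := lt_of_lt_of_le hx (le_max_left _ _)
      have h2 : a + u < b := by linarith
      have : a + u < min (max (|f x|) a) b := lt_min h1 h2
      linarith
  have hdg0 : ∀ u : ℝ, b - a ≤ u → distFun n g u = 0 := by
    intro u hu
    unfold distFun
    have : {x : Fin n → ℝ | u < |g x|} = ∅ := by
      ext x
      simp only [Set.mem_setOf_eq, Set.mem_empty_iff_false, iff_false, not_lt]
      rw [hgabs x]
      exact le_trans (hgle x) hu
    rw [this, measure_empty, ENNReal.toReal_zero]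
  -- lower bound for the Ledoux integral
  have hIlow : ∀ u ∈ Set.Ioi (0:ℝ),
      (Set.Ioo (0:ℝ) (b - a)).indicator (fun _ => m) u ≤ Igauss (distFun n g u) := by
    intro u hu
    by_cases hmem : u ∈ Set.Ioo (0:ℝ) (b - a)
    · rw [Set.indicator_of_mem hmem]
      rw [hdg u hmem.1 hmem.2]
      have hmem1 : 0 < u := hmem.1
      have hmem2 : u < b - a := hmem.2
      have hup : distFun n f (a + u) ≤ s + h :=
        distFun_rearr_le hfm (by linarith) (by rw [← hadef]; linarith)
      have hlo : s < distFun n f (a + u) :=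
        lt_distFun_of_lt_rearr (by linarith) (by change a + u < b; linarith)
      have := Igauss_min_le hsIoo hshIoo hlo.le hup
      rw [min_comm] at this
      exact this
    · rw [Set.indicator_of_notMem hmem]
      exact Igauss_nonneg _
  set C : ℝ := (2 * Real.pi) ^ (-(1:ℝ)/2) with hCdef
  have hFmeas : Measurable (fun u => Igauss (distFun n g u)) :=
    measurable_Igauss.comp (distFun_anti (F := g)).measurable
  have hFint : IntegrableOn (fun u => Igauss (distFun n g u)) (Set.Ioi (0:ℝ)) volume := by
    apply Integrable.mono' (g := (Set.Ioc (0:ℝ) (b - a)).indicator (fun _ => C))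
    · rw [integrable_indicator_iff measurableSet_Ioc]
      exact integrableOn_const (by simp [Real.volume_Ioc])
    · exact (hFmeas.aestronglyMeasurable).restrict
    · rw [ae_restrict_iff' measurableSet_Ioi]
      apply Filter.Eventually.of_forall
      intro u hu
      rcases le_or_gt u (b - a) with huc | huc
      · have hmem : u ∈ Set.Ioc (0:ℝ) (b - a) := ⟨hu, huc⟩
        rw [Set.indicator_of_mem hmem, Real.norm_eq_abs,
          abs_of_nonneg (Igauss_nonneg _)]
        exact Igauss_le_const _
      · have hmem : u ∉ Set.Ioc (0:ℝ) (b - a) := fun hc => absurd hc.2 (not_le.2 huc)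
        rw [Set.indicator_of_notMem hmem, hdg0 u huc.le, Igauss_zero]
        simp
  have hIndInt : IntegrableOn ((Set.Ioo (0:ℝ) (b - a)).indicator (fun _ => m))
      (Set.Ioi (0:ℝ)) volume := by
    apply Integrable.integrableOn
    rw [integrable_indicator_iff measurableSet_Ioo]
    exact integrableOn_const (by simp [Real.volume_Ioo])
  have hlow : m * (b - a) ≤ ∫ u in Set.Ioi (0:ℝ), Igauss (distFun n g u) := by
    have h1 : ∫ u in Set.Ioi (0:ℝ), (Set.Ioo (0:ℝ) (b - a)).indicator (fun _ => m) u
        = m * (b - a) := by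
      rw [integral_indicator measurableSet_Ioo, Measure.restrict_restrict measurableSet_Ioo]
      have hss : Set.Ioo (0:ℝ) (b - a) ∩ Set.Ioi 0 = Set.Ioo (0:ℝ) (b - a) :=
        Set.inter_eq_self_of_subset_left (fun x hx => hx.1)
      rw [hss, setIntegral_const, measureReal_def, Real.volume_Ioo, smul_eq_mul,
        ENNReal.toReal_ofReal (by linarith), sub_zero, mul_comm]
    rw [← h1]
    exact setIntegral_mono_on hIndInt hFint measurableSet_Ioi hIlow
  -- apply Ledoux
  have hLed := hled g hglip
  have hgradint : ∫ x, gradNorm n g x ∂gaussMeasure n = ∫ x in E, w x ∂gaussMeasure n := by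
    have hfun : (fun x => gradNorm n g x) = E.indicator w := funext hgrad
    rw [hfun, integral_indicator hEmeas]
  have hHL := hl_ineq hwm hw0 (K.coe_nonneg) hwK hEmeas hh hEh
  have hfinal : m * (b - a) ≤ ∫ t in (0:ℝ)..h, rearr n w t := by
    calc m * (b - a) ≤ ∫ u in Set.Ioi (0:ℝ), Igauss (distFun n g u) := hlow
      _ ≤ ∫ x, gradNorm n g x ∂gaussMeasure n := hLed
      _ = ∫ x in E, w x ∂gaussMeasure n := hgradint
      _ ≤ ∫ t in (0:ℝ)..h, rearr n w t := hHL
  calc (b - a) * m = m * (b - a) := mul_comm _ _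
    _ ≤ _ := hfinal

end F

section G
open Set Filter
open scoped ENNReal NNReal Topology

lemma seq_tendsto_nhdsNe (x : ℝ) :
    Tendsto (fun k : ℕ => x + 1/((k:ℝ)+1)) atTop (𝓝[≠] x) := by
  rw [tendsto_nhdsWithin_iff]
  constructor
  · have h1 : Tendsto (fun k : ℕ => x + 1/((k:ℝ)+1)) atTop (𝓝 (x + 0)) :=
      tendsto_const_nhds.add tendsto_one_div_add_atTop_nhds_zero_nat
    simpa using h1
  · apply Filter.Eventually.of_forall
    intro k
    have h2 : (0:ℝ) < 1/((k:ℝ)+1) := by positivity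
    simp only [Set.mem_compl_iff, Set.mem_singleton_iff]
    intro hc
    nlinarith [hc]

lemma slope_seq_tendsto {F : ℝ → ℝ} {x d : ℝ} (hF : HasDerivAt F d x) :
    Tendsto (fun k : ℕ => (F (x + 1/((k:ℝ)+1)) - F x) / (1/((k:ℝ)+1))) atTop (𝓝 d) := by
  have h1 := (hasDerivAt_iff_tendsto_slope.1 hF).comp (seq_tendsto_nhdsNe x)
  apply h1.congr
  intro k
  simp [slope_def_field, add_sub_cancel_left]

lemma lipschitz_ftc {G : ℝ → ℝ} {K : ℝ≥0} (hG : LipschitzWith K G) {a b : ℝ} (hab : a ≤ b) :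
    ∫ t in a..b, deriv G t = G b - G a := by
  have hGc : Continuous G := hG.continuous
  have hInt : ∀ c d : ℝ, IntervalIntegrable G volume c d :=
    fun c d => hGc.intervalIntegrable c d
  have hder_bound : ∀ x, ‖deriv G x‖ ≤ (K:ℝ) := by
    intro x
    by_cases hd : DifferentiableAt ℝ G x
    · calc ‖deriv G x‖ = ‖fderiv ℝ G x 1‖ := by rw [← fderiv_apply_one_eq_deriv]
        _ ≤ ‖fderiv ℝ G x‖ * ‖(1:ℝ)‖ := (fderiv ℝ G x).le_opNorm 1
        _ = ‖fderiv ℝ G x‖ := by simp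
        _ ≤ (K:ℝ) := norm_fderiv_le_of_lipschitz ℝ hG
    · rw [deriv_zero_of_not_differentiableAt hd]
      simp
  have hder_meas : Measurable (deriv G) := measurable_deriv G
  set φ : ℕ → ℝ → ℝ := fun k x => (G (x + 1/((k:ℝ)+1)) - G x) / (1/((k:ℝ)+1)) with hφ
  have hφc : ∀ k, Continuous (φ k) :=
    fun k => (((hGc.comp (continuous_id.add continuous_const)).sub hGc).div_const _)
  have h_lim : ∀ᵐ x ∂(volume.restrict (Set.Ioc a b)),
      Tendsto (fun k => φ k x) atTop (𝓝 (deriv G x)) := by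
    apply ae_restrict_of_ae
    filter_upwards [hG.ae_differentiableAt (μ := volume)] with x hx
    exact slope_seq_tendsto hx.hasDerivAt
  have h_bound : ∀ k, ∀ᵐ x ∂(volume.restrict (Set.Ioc a b)), ‖φ k x‖ ≤ (K:ℝ) := by
    intro k
    apply Filter.Eventually.of_forall
    intro x
    have hkp : (0:ℝ) < 1/((k:ℝ)+1) := by positivity
    have hd : dist (G (x + 1/((k:ℝ)+1))) (G x) ≤ (K:ℝ) * dist (x + 1/((k:ℝ)+1)) x :=
      hG.dist_le_mul _ _
    rw [Real.dist_eq, Real.dist_eq] at hd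
    have h2 : |x + 1/((k:ℝ)+1) - x| = 1/((k:ℝ)+1) := by
      rw [add_sub_cancel_left, abs_of_pos hkp]
    rw [h2] at hd
    rw [Real.norm_eq_abs, hφ]
    simp only
    rw [abs_div, abs_of_pos hkp, div_le_iff₀ hkp]
    exact hd
  have hdom := MeasureTheory.tendsto_integral_of_dominated_convergence
    (μ := volume.restrict (Set.Ioc a b)) (F := φ) (f := deriv G) (fun _ => (K:ℝ))
    (fun k => (hφc k).aestronglyMeasurable.restrict)
    (integrableOn_const (by simp [Real.volume_Ioc]))
    h_bound h_lim
  have hIk : ∀ k : ℕ, ∫ x in Set.Ioc a b, φ k x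
      = ((∫ t in b..(b + 1/((k:ℝ)+1)), G t) - ∫ t in a..(a + 1/((k:ℝ)+1)), G t)
        / (1/((k:ℝ)+1)) := by
    intro k
    rw [← intervalIntegral.integral_of_le hab]
    have h1 : ∫ x in a..b, φ k x
        = ((∫ x in a..b, G (x + 1/((k:ℝ)+1))) - ∫ x in a..b, G x) / (1/((k:ℝ)+1)) := by
      have hint1 : IntervalIntegrable (fun x => G (x + 1/((k:ℝ)+1))) volume a b :=
        (hGc.comp (continuous_id.add continuous_const)).intervalIntegrable _ _
      rw [← intervalIntegral.integral_sub hint1 (hGc.intervalIntegrable a b)]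
      rw [← intervalIntegral.integral_div]
    rw [h1, intervalIntegral.integral_comp_add_right]
    congr 1
    have hch1 := intervalIntegral.integral_add_adjacent_intervals
      (hInt a (a + 1/((k:ℝ)+1))) (hInt (a + 1/((k:ℝ)+1)) (b + 1/((k:ℝ)+1)))
    have hch2 := intervalIntegral.integral_add_adjacent_intervals
      (hInt a b) (hInt b (b + 1/((k:ℝ)+1)))
    linarith
  have hFB : HasDerivAt (fun u => ∫ t in b..u, G t) (G b) b :=
    intervalIntegral.integral_hasDerivAt_right (hInt b b)
      hGc.stronglyMeasurable.stronglyMeasurableAtFilter hGc.continuousAt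
  have hFA : HasDerivAt (fun u => ∫ t in a..u, G t) (G a) a :=
    intervalIntegral.integral_hasDerivAt_right (hInt a a)
      hGc.stronglyMeasurable.stronglyMeasurableAtFilter hGc.continuousAt
  have hTB : Tendsto (fun k : ℕ => (∫ t in b..(b + 1/((k:ℝ)+1)), G t) / (1/((k:ℝ)+1)))
      atTop (𝓝 (G b)) := by
    have h3 := slope_seq_tendsto hFB
    simp only [intervalIntegral.integral_same, sub_zero] at h3
    exact h3
  have hTA : Tendsto (fun k : ℕ => (∫ t in a..(a + 1/((k:ℝ)+1)), G t) / (1/((k:ℝ)+1)))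
      atTop (𝓝 (G a)) := by
    have h3 := slope_seq_tendsto hFA
    simp only [intervalIntegral.integral_same, sub_zero] at h3
    exact h3
  have hT2 : Tendsto (fun k => ∫ x in Set.Ioc a b, φ k x) atTop (𝓝 (G b - G a)) := by
    apply (hTB.sub hTA).congr
    intro k
    rw [hIk k, sub_div]
  rw [intervalIntegral.integral_of_le hab]
  exact tendsto_nhds_unique hdom hT2

end G

/-- Assuming Ledoux's inequality, the truncation argument yields the oscillation bound
`(f*(s) - f*(s+h)) min(I(s+h), I(s)) ≤ ∫₀ʰ |∇f|*(t) dt`; in particular `f*` is locally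
absolutely continuous on `(0,1)` (it satisfies the fundamental theorem of calculus). -/
theorem ledoux_implies_truncation_bound (n : ℕ)
    (hled : ∀ g : (Fin n → ℝ) → ℝ, (∃ K, LipschitzWith K g) →
      (∫ s in Set.Ioi (0:ℝ), Igauss (distFun n g s)) ≤ ∫ x, gradNorm n g x ∂gaussMeasure n) :
    ∀ f : (Fin n → ℝ) → ℝ, (∃ K, LipschitzWith K f) →
      (∀ s h : ℝ, 0 < s → 0 < h → s + h < 1 →
        (rearr n f s - rearr n f (s + h)) * min (Igauss (s + h)) (Igauss s) ≤
          ∫ t in (0:ℝ)..h, rearr n (gradNorm n f) t) ∧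
      (∀ a b : ℝ, 0 < a → a ≤ b → b < 1 →
        rearr n f b = rearr n f a + ∫ s in a..b, deriv (rearr n f) s) := by
  intro f hf
  obtain ⟨K, hK⟩ := hf
  have hfm : Measurable f := hK.continuous.measurable
  constructor
  · intro s h hs hh hsh
    exact part1_core hled f hK hs hh hsh
  · intro a b ha hab hb1
    rcases eq_or_lt_of_le hab with rfl | hab'
    · rw [intervalIntegral.integral_same]; ring
    set w : (Fin n → ℝ) → ℝ := gradNorm n f with hwdef
    have hwK : ∀ x, w x ≤ (K:ℝ) := fun x => norm_fderiv_le_of_lipschitz ℝ hK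
    have hKd : distFun n w (K:ℝ) = 0 := by
      unfold distFun
      have hempty : {x : Fin n → ℝ | (K:ℝ) < |w x|} = ∅ := by
        ext x
        simp only [Set.mem_setOf_eq, Set.mem_empty_iff_false, iff_false, not_lt]
        rw [abs_of_nonneg (show (0:ℝ) ≤ w x from norm_nonneg _)]
        exact hwK x
      rw [hempty, measure_empty, ENNReal.toReal_zero]
    set a' : ℝ := a/2 with ha'def
    set b' : ℝ := (1+b)/2 with hb'def
    have ha'0 : 0 < a' := by rw [ha'def]; linarith
    have ha'a : a' < a := by rw [ha'def]; linarith
    have hbb' : b < b' := by rw [hb'def]; linarith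
    have hb'1 : b' < 1 := by rw [hb'def]; linarith
    have ha'Ioo : a' ∈ Set.Ioo (0:ℝ) 1 := ⟨ha'0, by linarith⟩
    have hb'Ioo : b' ∈ Set.Ioo (0:ℝ) 1 := ⟨by linarith, hb'1⟩
    set m : ℝ := min (Igauss a') (Igauss b') with hmdef
    have hm0 : 0 < m := lt_min (Igauss_pos ha'Ioo) (Igauss_pos hb'Ioo)
    set L : ℝ := (K:ℝ)/m with hLdef
    have hL0 : 0 ≤ L := div_nonneg K.coe_nonneg hm0.le
    have hIntBound : ∀ h' : ℝ, 0 < h' → (∫ t in (0:ℝ)..h', rearr n w t) ≤ (K:ℝ) * h' := by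
      intro h' hh'
      have hai : IntervalIntegrable (rearr n w) volume 0 h' := by
        apply AntitoneOn.intervalIntegrable
        intro x hx y hy hxy
        rw [Set.uIcc_of_le hh'.le] at hx hy
        exact rearr_antiOn_of_bound K.coe_nonneg hKd hx.1 hy.1 hxy
      calc (∫ t in (0:ℝ)..h', rearr n w t) ≤ ∫ _ in (0:ℝ)..h', (K:ℝ) := by
            apply intervalIntegral.integral_mono_on hh'.le hai intervalIntegrable_const
            intro t ht
            exact rearr_le_of_distFun_zero K.coe_nonneg hKd ht.1
        _ = (K:ℝ) * h' := by simp [mul_comm]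
    have key : ∀ u v : ℝ, u ∈ Set.Icc a' b' → v ∈ Set.Icc a' b' → u ≤ v →
        rearr n f u - rearr n f v ≤ L * (v - u) := by
      intro u v hu hv huv
      rcases eq_or_lt_of_le huv with rfl | huv'
      · simp
      set h' : ℝ := v - u with hh'def
      have hh'0 : 0 < h' := by rw [hh'def]; linarith
      have hv' : u + h' = v := by rw [hh'def]; ring
      have hu0 : 0 < u := lt_of_lt_of_le ha'0 hu.1
      have hsh1 : u + h' < 1 := by rw [hv']; linarith [hv.2]
      have h1 := part1_core hled f hK hu0 hh'0 hsh1
      rw [hv'] at h1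
      have hminm : m ≤ min (Igauss v) (Igauss u) := by
        apply le_min
        · exact Igauss_min_le ha'Ioo hb'Ioo hv.1 hv.2
        · exact Igauss_min_le ha'Ioo hb'Ioo hu.1 hu.2
      have hd0 : 0 ≤ rearr n f u - rearr n f v :=
        sub_nonneg.2 (rearr_anti hfm hu0 huv)
      have h2 : (rearr n f u - rearr n f v) * m ≤ (K:ℝ) * h' := by
        calc (rearr n f u - rearr n f v) * m
            ≤ (rearr n f u - rearr n f v) * min (Igauss v) (Igauss u) := by
              apply mul_le_mul_of_nonneg_left hminm hd0
          _ ≤ ∫ t in (0:ℝ)..h', rearr n w t := h1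
          _ ≤ (K:ℝ) * h' := hIntBound h' hh'0
      rw [hLdef, div_mul_eq_mul_div, le_div_iff₀ hm0]
      calc (rearr n f u - rearr n f v) * m ≤ (K:ℝ) * h' := h2
        _ = (K:ℝ) * (v - u) := by rw [hh'def]
    have hLip : LipschitzOnWith (Real.toNNReal L) (rearr n f) (Set.Icc a' b') := by
      rw [lipschitzOnWith_iff_dist_le_mul]
      intro x hx y hy
      rw [Real.coe_toNNReal _ hL0, Real.dist_eq, Real.dist_eq]
      rcases le_total x y with hxy | hxy
      · have h1 := key x y hx hy hxy
        have h2 : rearr n f y ≤ rearr n f x :=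
          rearr_anti hfm (lt_of_lt_of_le ha'0 hx.1) hxy
        rw [abs_of_nonneg (sub_nonneg.2 h2), abs_sub_comm, abs_of_nonneg (sub_nonneg.2 hxy)]
        linarith
      · have h1 := key y x hy hx hxy
        have h2 : rearr n f x ≤ rearr n f y :=
          rearr_anti hfm (lt_of_lt_of_le ha'0 hy.1) hxy
        rw [abs_sub_comm, abs_of_nonneg (sub_nonneg.2 h2), abs_of_nonneg (sub_nonneg.2 hxy)]
        linarith
    obtain ⟨G, hGlip, hGeq⟩ := hLip.extend_real
    have hderiv_eq : ∀ x ∈ Set.Icc a b, deriv (rearr n f) x = deriv G x := by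
      intro x hx
      apply Filter.EventuallyEq.deriv_eq
      apply Filter.eventually_of_mem
        (isOpen_Ioo.mem_nhds (⟨lt_of_lt_of_le ha'a hx.1, lt_of_le_of_lt hx.2 hbb'⟩ :
          x ∈ Set.Ioo a' b'))
      intro y hy
      exact hGeq (Set.Ioo_subset_Icc_self hy)
    have hint_congr : ∫ s in a..b, deriv (rearr n f) s = ∫ s in a..b, deriv G s := by
      apply intervalIntegral.integral_congr
      intro x hx
      rw [Set.uIcc_of_le hab] at hx
      exact hderiv_eq x hx
    have hftc := lipschitz_ftc hGlip hab
    rw [hint_congr, hftc]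
    rw [← hGeq (⟨ha'a.le, by linarith⟩ : a ∈ Set.Icc a' b'),
      ← hGeq (⟨by linarith, hbb'.le⟩ : b ∈ Set.Icc a' b')]
    ring
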